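/- Let 0 < α < 2 and ω ∈ ℂ. Then for all t > 0, the derivative identity ∂_t E_{α,1}(ω t^α) = ω t^{α-1} E_{α,α}(ω t^α) holds. -/

import Mathlib

open Complex Real Filter Nat

lemma ml_summable_aux (α β r : ℝ) (hα : 0 < α) (hβ : 0 < β) (hr : 0 ≤ r) :
    Summable (fun n : ℕ => (n + 1 : ℝ) * r ^ n / Real.Gamma (α * n + β)) := by
  obtain ⟨Q, hQ1, hQr⟩ : ∃ Q : ℝ, 1 ≤ Q ∧ 2 * r ≤ Q ^ α := by
    refine ⟨max 1 ((2*r+1) ^ (1/α)), le_max_left _ _, ?_⟩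
    calc 2 * r ≤ 2 * r + 1 := by linarith
    _ = ((2*r+1) ^ (1/α)) ^ α := by
        rw [← Real.rpow_mul (by linarith), one_div, inv_mul_cancel₀ hα.ne', Real.rpow_one]
    _ ≤ (max 1 ((2*r+1) ^ (1/α))) ^ α := by
        apply Real.rpow_le_rpow (Real.rpow_nonneg (by linarith) _) (le_max_right _ _) hα.le
  have hQ0 : (0:ℝ) < Q := lt_of_lt_of_le one_pos hQ1
  have hev : ∀ᶠ m : ℕ in atTop, Q ^ m ≤ (m ! : ℝ) := by
    have h := (FloorSemiring.tendsto_pow_div_factorial_atTop Q).eventually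
      (eventually_le_nhds (show (0:ℝ) < 1 by norm_num))
    filter_upwards [h] with m hm
    rw [div_le_one (by positivity)] at hm
    exact hm
  have hfl : Tendsto (fun n : ℕ => ⌊α * n + β⌋₊) atTop atTop :=
    (tendsto_nat_floor_atTop (α := ℝ)).comp
      (tendsto_atTop_add_const_right _ β ((tendsto_natCast_atTop_atTop (R := ℝ)).const_mul_atTop hα))
  have hfl1 : Tendsto (fun n : ℕ => ⌊α * n + β⌋₊ - 1) atTop atTop :=
    (tendsto_sub_atTop_nat 1).comp hfl
  have key : ∀ᶠ n : ℕ in atTop,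
      (n + 1 : ℝ) * r ^ n / Real.Gamma (α * n + β) ≤
        Q ^ (2 - β) * ((n + 1 : ℝ) * (1/2) ^ n) := by
    filter_upwards [hfl.eventually (eventually_ge_atTop 3), hfl1.eventually hev] with n h3 hQm
    set x : ℝ := α * n + β with hx
    have hx0 : 0 < x := by positivity
    set m : ℕ := ⌊x⌋₊ with hm
    have hx2 : (2:ℝ) ≤ (m:ℝ) := by exact_mod_cast le_trans (by norm_num) h3
    have hfl_le : (m : ℝ) ≤ x := Nat.floor_le hx0.le
    have hlt : x < m + 1 := Nat.lt_floor_add_one x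
    have h1 : Real.Gamma (m:ℝ) ≤ Real.Gamma x := by
      rcases eq_or_lt_of_le hfl_le with h | h
      · rw [h]
      · exact (Real.Gamma_strictMonoOn_Ici (Set.mem_Ici.mpr hx2) (Set.mem_Ici.mpr (le_trans hx2 hfl_le)) h).le
    have h2 : Real.Gamma (m : ℝ) = ((m - 1)! : ℝ) := by
      have hm1 : 1 ≤ m := by omega
      have : (m : ℝ) = ((m - 1 : ℕ) : ℝ) + 1 := by
        push_cast [Nat.cast_sub hm1]; ring
      rw [this, Real.Gamma_nat_eq_factorial]
    have hGamma_ge : Q ^ (x - 2) ≤ Real.Gamma x := by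
      calc Q ^ (x - 2) ≤ Q ^ ((m - 1 : ℕ) : ℝ) := by
            apply Real.rpow_le_rpow_of_exponent_le hQ1
            have hm1 : 1 ≤ m := by omega
            push_cast [Nat.cast_sub hm1]
            linarith
      _ = Q ^ (m - 1 : ℕ) := Real.rpow_natCast _ _
      _ ≤ ((m - 1)! : ℝ) := hQm
      _ ≤ Real.Gamma x := h2 ▸ h1
    have hG0 : 0 < Real.Gamma x := Real.Gamma_pos_of_pos hx0
    rw [div_le_iff₀ hG0]
    calc (n + 1 : ℝ) * r ^ n ≤ (n + 1 : ℝ) * ((1/2) ^ n * Q ^ (α * n)) := by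
          apply mul_le_mul_of_nonneg_left _ (by positivity)
          have : r ^ n ≤ (Q ^ α / 2) ^ n :=
            pow_le_pow_left₀ hr (by linarith) n
          calc r ^ n ≤ (Q ^ α / 2) ^ n := this
          _ = (1/2) ^ n * (Q ^ α) ^ n := by rw [← mul_pow]; congr 1; ring
          _ = (1/2) ^ n * Q ^ (α * n) := by
              rw [Real.rpow_mul hQ0.le, Real.rpow_natCast]
    _ ≤ Q ^ (2 - β) * ((n + 1 : ℝ) * (1/2) ^ n) * Real.Gamma x := by
          have h4 : Q ^ (α * n) = Q ^ (2 - β) * Q ^ (x - 2) := by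
            rw [← Real.rpow_add hQ0, hx]; ring_nf
          rw [h4]
          have := mul_le_mul_of_nonneg_left hGamma_ge (show (0:ℝ) ≤ (n+1) * (1/2)^n * Q^(2-β) by positivity)
          calc (n + 1 : ℝ) * ((1/2) ^ n * (Q ^ (2-β) * Q ^ (x-2)))
              = (n+1) * (1/2)^n * Q^(2-β) * Q ^ (x-2) := by ring
          _ ≤ (n+1) * (1/2)^n * Q^(2-β) * Real.Gamma x := this
          _ = Q ^ (2 - β) * ((n + 1 : ℝ) * (1/2) ^ n) * Real.Gamma x := by ring
  -- conclude summability
  have hsum : Summable (fun n : ℕ => Q ^ (2 - β) * ((n + 1 : ℝ) * (1/2) ^ n)) := by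
    apply Summable.mul_left
    have h1 : Summable (fun n : ℕ => (n : ℝ) * (1/2) ^ n) := by
      simpa using summable_pow_mul_geometric_of_norm_lt_one 1 (r := (1/2 : ℝ)) (by norm_num)
    have h2 : Summable (fun n : ℕ => ((1:ℝ)/2) ^ n) := summable_geometric_of_lt_one (by norm_num) (by norm_num)
    simpa [add_mul] using h1.add h2
  obtain ⟨N, hN⟩ := eventually_atTop.mp key
  rw [← summable_nat_add_iff N]
  apply Summable.of_nonneg_of_le (fun n => by positivity) (fun n => hN (n + N) (by omega))
  exact (summable_nat_add_iff N).mpr hsum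

/-- The Mittag-Leffler function `E_{α,β}(z) = ∑ zⁿ / Γ(αn+β)`. -/
noncomputable def mlE (α β : ℝ) (z : ℂ) : ℂ :=
  ∑' n : ℕ, z ^ n / Complex.Gamma ((α * n + β : ℝ) : ℂ)

lemma mlE_summable (α β : ℝ) (hα : 0 < α) (hβ : 0 < β) (z : ℂ) :
    Summable (fun n : ℕ => z ^ n / Complex.Gamma ((α * n + β : ℝ) : ℂ)) := by
  apply Summable.of_norm
  apply (ml_summable_aux α β ‖z‖ hα hβ (norm_nonneg z)).of_nonneg_of_le
    (fun n => norm_nonneg _)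
  intro n
  have hx : 0 < α * n + β := by positivity
  have hG : 0 < Real.Gamma (α * n + β) := Real.Gamma_pos_of_pos hx
  rw [norm_div, norm_pow, Complex.Gamma_ofReal, Complex.norm_real,
    Real.norm_eq_abs, abs_of_pos hG]
  gcongr
  exact le_mul_of_one_le_left (by positivity) (by exact_mod_cast Nat.le_add_left 1 n)

theorem mittagLeffler_deriv1 (α : ℝ) (hα0 : 0 < α) (hα2 : α < 2) (ω : ℂ) (t : ℝ)
    (ht : 0 < t) :
    HasDerivAt (fun s : ℝ => mlE α 1 (ω * (s ^ α : ℝ)))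
      (ω * ((t ^ (α - 1) : ℝ) : ℂ) * mlE α α (ω * (t ^ α : ℝ))) t := by
  set S : Set ℝ := Set.Ioo (t/2) (t+1) with hS
  have hSopen : IsOpen S := isOpen_Ioo
  have htS : t ∈ S := ⟨by linarith, by linarith⟩
  have hpos : ∀ s ∈ S, (0:ℝ) < s := fun s hs => lt_trans (by linarith) hs.1
  set f : ℕ → ℝ → ℂ := fun n s =>
    (ω * ((s ^ α : ℝ) : ℂ)) ^ n / Complex.Gamma ((α * n + 1 : ℝ) : ℂ) with hf
  set f' : ℕ → ℝ → ℂ := fun n s =>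
    ((n : ℂ) * (ω * ((s ^ α : ℝ) : ℂ)) ^ (n - 1) * (ω * ((α * s ^ (α - 1) : ℝ) : ℂ))) /
      Complex.Gamma ((α * n + 1 : ℝ) : ℂ) with hf'
  -- derivative of each term
  have hderiv : ∀ n : ℕ, ∀ s : ℝ, 0 < s → HasDerivAt (f n) (f' n s) s := by
    intro n s hs
    have h1 : HasDerivAt (fun s : ℝ => ((s ^ α : ℝ) : ℂ)) ((α * s ^ (α - 1) : ℝ) : ℂ) s :=
      (Real.hasDerivAt_rpow_const (Or.inl hs.ne')).ofReal_comp
    have h2 : HasDerivAt (fun y : ℝ => (ω * ((y ^ α : ℝ) : ℂ)) ^ n)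
        ((ω * ((α * s ^ (α - 1) : ℝ) : ℂ)) • ((n : ℂ) * (ω * ((s ^ α : ℝ) : ℂ)) ^ (n - 1))) s := by
      exact HasDerivAt.scomp (x := s) (hasDerivAt_pow n _) (h1.const_mul ω)
    have h3 := h2.div_const (Complex.Gamma ((α * n + 1 : ℝ) : ℂ))
    rw [hf, hf']
    convert h3 using 1
    · rfl
    · simp only [smul_eq_mul]
      ring
  -- bound constants
  set R : ℝ := max (‖ω‖ * (t+1) ^ α) 1 with hR
  have hR1 : (1:ℝ) ≤ R := le_max_right _ _
  set C : ℝ := ‖ω‖ * (α * ((t+1) ^ (α-1) + (t/2) ^ (α-1))) with hC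
  set u : ℕ → ℝ := fun n => ((n + 1 : ℝ) * R ^ n / Real.Gamma (α * n + 1)) * C with hu
  have husum : Summable u :=
    (ml_summable_aux α 1 R hα0 one_pos (le_trans zero_le_one hR1)).mul_right C
  -- the bound
  have hbound : ∀ n : ℕ, ∀ s ∈ S, ‖f' n s‖ ≤ u n := by
    intro n s hs
    have hs0 : 0 < s := hpos s hs
    have hGpos : 0 < Real.Gamma (α * n + 1) := Real.Gamma_pos_of_pos (by positivity)
    have hωs : ‖ω * ((s ^ α : ℝ) : ℂ)‖ ≤ R := by
      rw [norm_mul, Complex.norm_real, Real.norm_eq_abs, abs_of_pos (Real.rpow_pos_of_pos hs0 α)]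
      refine le_trans ?_ (le_max_left _ _)
      exact mul_le_mul_of_nonneg_left
        (Real.rpow_le_rpow hs0.le (by linarith [hs.2]) hα0.le) (norm_nonneg ω)
    have hs1 : s ^ (α - 1) ≤ (t+1) ^ (α-1) + (t/2) ^ (α-1) := by
      rcases le_or_gt 1 α with h | h
      · have : s ^ (α - 1) ≤ (t+1) ^ (α-1) :=
          Real.rpow_le_rpow hs0.le (by linarith [hs.2]) (by linarith)
        have h2 : (0:ℝ) ≤ (t/2) ^ (α-1) := Real.rpow_nonneg (by linarith) _
        linarith
      · have : s ^ (α - 1) ≤ (t/2) ^ (α-1) :=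
          Real.rpow_le_rpow_of_nonpos (by linarith) hs.1.le (by linarith)
        have h2 : (0:ℝ) ≤ (t+1) ^ (α-1) := Real.rpow_nonneg (by linarith) _
        linarith
    have hfactor : ‖ω * ((α * s ^ (α - 1) : ℝ) : ℂ)‖ ≤ C := by
      rw [norm_mul, Complex.norm_real, Real.norm_eq_abs,
        abs_of_pos (by positivity : (0:ℝ) < α * s ^ (α-1)), hC]
      apply mul_le_mul_of_nonneg_left _ (norm_nonneg ω)
      exact mul_le_mul_of_nonneg_left hs1 hα0.le
    have hC0 : (0:ℝ) ≤ C := by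
      rw [hC]
      have h1 : (0:ℝ) ≤ (t+1) ^ (α-1) := Real.rpow_nonneg (by linarith) _
      have h2 : (0:ℝ) ≤ (t/2) ^ (α-1) := Real.rpow_nonneg (by linarith) _
      positivity
    have hnorm : ‖f' n s‖ = (n : ℝ) * ‖ω * ((s ^ α : ℝ) : ℂ)‖ ^ (n-1) *
        ‖ω * ((α * s ^ (α - 1) : ℝ) : ℂ)‖ / Real.Gamma (α * n + 1) := by
      rw [hf']
      simp only [norm_div, norm_mul, norm_pow, Complex.Gamma_ofReal, Complex.norm_real,
        Real.norm_eq_abs, abs_of_pos hGpos, Complex.norm_natCast]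
    rw [hnorm]
    show _ ≤ ((n + 1 : ℝ) * R ^ n / Real.Gamma (α * n + 1)) * C
    rw [div_mul_eq_mul_div]
    have hnum : (n : ℝ) * ‖ω * ((s ^ α : ℝ) : ℂ)‖ ^ (n-1) *
        ‖ω * ((α * s ^ (α - 1) : ℝ) : ℂ)‖ ≤ (n + 1 : ℝ) * R ^ n * C := by
      have h5 : ‖ω * ((s ^ α : ℝ) : ℂ)‖ ^ (n-1) ≤ R ^ n :=
        le_trans (pow_le_pow_left₀ (norm_nonneg _) hωs _)
          (pow_le_pow_right₀ hR1 (Nat.sub_le n 1))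
      apply mul_le_mul _ hfactor (norm_nonneg _) (by positivity)
      exact mul_le_mul (by linarith [Nat.cast_nonneg (α := ℝ) n]) h5 (by positivity)
        (by linarith [Nat.cast_nonneg (α := ℝ) n])
    gcongr
  -- uniform convergence of the derivative series
  have hunif : TendstoUniformlyOn (fun N s => ∑ n ∈ Finset.range N, f' n s)
      (fun s => ∑' n, f' n s) Filter.atTop S :=
    tendstoUniformlyOn_tsum_nat husum hbound
  -- pointwise convergence of the series itself
  have hfg : ∀ x ∈ S, Filter.Tendsto (fun N => ∑ n ∈ Finset.range N, f n x)
      Filter.atTop (nhds (mlE α 1 (ω * (x ^ α : ℝ)))) := by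
    intro x hx
    have := (mlE_summable α 1 hα0 one_pos (ω * ((x ^ α : ℝ) : ℂ))).hasSum
    exact this.tendsto_sum_nat
  -- apply the uniform limit theorem
  have hmain : HasDerivAt (fun s : ℝ => mlE α 1 (ω * (s ^ α : ℝ))) (∑' n, f' n t) t := by
    apply hasDerivAt_of_tendstoUniformlyOn hSopen hunif _ hfg htS
    filter_upwards with N x hx
    exact HasDerivAt.fun_sum (fun n _ => hderiv n x (hpos x hx))
  -- identify the sum of the derivative series
  have hfsum : Summable (fun n => f' n t) :=
    Summable.of_norm ((husum).of_nonneg_of_le (fun n => norm_nonneg _)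
      (fun n => hbound n t htS))
  have hshift : ∑' n, f' n t = ∑' n, f' (n+1) t := by
    rw [Summable.tsum_eq_zero_add hfsum]
    simp [hf']
  have hterm : ∀ n : ℕ, f' (n+1) t =
      ω * ((t ^ (α - 1) : ℝ) : ℂ) *
        ((ω * ((t ^ α : ℝ) : ℂ)) ^ n / Complex.Gamma ((α * n + α : ℝ) : ℂ)) := by
    intro n
    have hx0 : (0:ℝ) < α * n + α := by positivity
    have hGne : Complex.Gamma ((α * n + α : ℝ) : ℂ) ≠ 0 := by
      rw [Complex.Gamma_ofReal]
      exact_mod_cast (Real.Gamma_pos_of_pos hx0).ne'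
    have hcast : ((α * (n+1 : ℕ) + 1 : ℝ) : ℂ) = ((α * n + α : ℝ) : ℂ) + 1 := by
      push_cast; ring
    have hGadd : Complex.Gamma ((α * (n+1 : ℕ) + 1 : ℝ) : ℂ) =
        ((α * n + α : ℝ) : ℂ) * Complex.Gamma ((α * n + α : ℝ) : ℂ) := by
      rw [hcast, Complex.Gamma_add_one _ (by exact_mod_cast hx0.ne')]
    rw [hf']
    simp only [hGadd]
    have hne : ((α * n + α : ℝ) : ℂ) ≠ 0 := by exact_mod_cast hx0.ne'
    have hpow : (ω * ((t ^ α : ℝ) : ℂ)) ^ ((n+1) - 1) = (ω * ((t ^ α : ℝ) : ℂ)) ^ n := rfl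
    rw [hpow]
    have hre : ((α * t ^ (α - 1) : ℝ) : ℂ) = (α : ℂ) * ((t ^ (α-1) : ℝ) : ℂ) := by push_cast; ring
    have hcoef : ((n : ℕ) + 1 : ℂ) * (α : ℂ) = ((α * n + α : ℝ) : ℂ) := by push_cast; ring
    rw [hre, ← mul_div_assoc, div_eq_div_iff (mul_ne_zero hne hGne) hGne]
    push_cast
    ring
  rw [hshift] at hmain
  have : ∑' n, f' (n+1) t = ω * ((t ^ (α - 1) : ℝ) : ℂ) * mlE α α (ω * (t ^ α : ℝ)) := by
    simp only [hterm]
    rw [tsum_mul_left]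
    rfl
  rwa [this] at hmain
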